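/- Let g be a pro-nilpotent pre-Lie algebra (concentrated in degree 0, complete filtered). Then the action of the exponential group Exp(g) on the set g, given by β·exp(x) = β + Σ_{j≥1}(1/j!)((⋯(β•x)•⋯)•x) + e_x where e_x = Σ_{j≥1} x^{•j}/j!, is free and transitive. -/

import Mathlib

/-- `rIter b x k a` is the `k`-fold right pre-Lie multiplication of `a` by `x`:
`((…(a•x)•x)…)•x`. -/
def rIter {G : Type*} (b : G → G → G) (x : G) : ℕ → G → G
  | 0, a => a
  | k + 1, a => b (rIter b x k a) x

/-- `actExp b N β x = β + Σ_{j=1}^{N} (1/j!)((…(β•x)…)•x + x^{•j})`, the (truncated,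
exact by nilpotence) formula for the action `β·exp(x)` of the exponential group of a
pro-nilpotent pre-Lie algebra on itself. -/
def actExp {G : Type*} [AddCommGroup G] [Module ℚ G] (b : G → G → G) (N : ℕ)
    (β x : G) : G :=
  β + ∑ j ∈ Finset.range N,
    ((Nat.factorial (j + 1) : ℚ))⁻¹ • (rIter b x (j + 1) β + rIter b x j x)

namespace PreLieAux

variable {G : Type*} [AddCommGroup G] [Module ℚ G]

def Dfil (b : G →ₗ[ℚ] G →ₗ[ℚ] G) : ℕ → Submodule ℚ G
  | 0 => ⊤
  | 1 => ⊤
  | (m+2) => ⨆ i : Fin (m+1),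
      Submodule.span ℚ (Set.image2 (fun u v => b u v)
        (Dfil b (i.val+1) : Set G) (Dfil b (m+1-i.val) : Set G))
  decreasing_by
  · have := i.isLt; omega
  · omega

lemma Dfil_one (b : G →ₗ[ℚ] G →ₗ[ℚ] G) : Dfil b 1 = ⊤ := by simp [Dfil]

lemma mem_Dfil_one (b : G →ₗ[ℚ] G →ₗ[ℚ] G) (z : G) : z ∈ Dfil b 1 := by
  rw [Dfil_one]; trivial

lemma Dfil_succ_succ (b : G →ₗ[ℚ] G →ₗ[ℚ] G) (m : ℕ) :
    Dfil b (m+2) = ⨆ i : Fin (m+1),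
      Submodule.span ℚ (Set.image2 (fun u v => b u v)
        (Dfil b (i.val+1) : Set G) (Dfil b (m+1-i.val) : Set G)) := by
  rw [Dfil]

lemma mulD (b : G →ₗ[ℚ] G →ₗ[ℚ] G) {i j : ℕ} {u v : G} (hi : 1 ≤ i) (hj : 1 ≤ j)
    (hu : u ∈ Dfil b i) (hv : v ∈ Dfil b j) : b u v ∈ Dfil b (i + j) := by
  rcases i with _ | i'
  · omega
  rcases j with _ | j'
  · omega
  rw [show i' + 1 + (j' + 1) = i' + j' + 2 from by omega, Dfil_succ_succ]
  have hv' : v ∈ Dfil b (i' + j' + 1 - (⟨i', by omega⟩ : Fin (i' + j' + 1)).val) := by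
    simpa [show i' + j' + 1 - i' = j' + 1 from by omega] using hv
  exact le_iSup (fun i : Fin (i' + j' + 1) =>
      Submodule.span ℚ (Set.image2 (fun u v => b u v)
        (Dfil b (i.val+1) : Set G) (Dfil b (i'+j'+1-i.val) : Set G)))
      ⟨i', by omega⟩
    (Submodule.subset_span (Set.mem_image2_of_mem hu hv'))

lemma monoD (b : G →ₗ[ℚ] G →ₗ[ℚ] G) : ∀ k, Dfil b (k+1) ≤ Dfil b k := by
  intro k
  induction k using Nat.strong_induction_on with
  | _ k ih =>
    match k with
    | 0 => rw [show Dfil b 0 = ⊤ from by simp [Dfil]]; exact le_top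
    | 1 => rw [Dfil_one]; exact le_top
    | (m+2) =>
      rw [show m + 2 + 1 = m + 1 + 2 from rfl, Dfil_succ_succ]
      refine iSup_le fun i => ?_
      rw [Submodule.span_le]
      rintro z ⟨u, hu, v, hv, rfl⟩
      simp only [SetLike.mem_coe] at hu hv ⊢
      have hib : i.val ≤ m + 1 := by have := i.isLt; omega
      rcases Nat.eq_zero_or_pos i.val with h0 | hpos
      · rw [h0] at hu hv
        have hv2 : v ∈ Dfil b (m + 1) := ih (m+1) (by omega) (by simpa using hv)
        have := mulD b (le_refl 1) (by omega) hu hv2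
        rwa [show 1 + (m+1) = m + 2 from by omega] at this
      · obtain ⟨c, hc⟩ : ∃ c, i.val = c + 1 := ⟨i.val - 1, by omega⟩
        rw [hc] at hu hv
        have hu2 : u ∈ Dfil b (c + 1) := ih (c+1) (by omega) hu
        have hv2 : v ∈ Dfil b (m + 2 - (c+1)) := hv
        have := mulD b (by omega) (by omega : 1 ≤ m + 2 - (c+1)) hu2 hv2
        rwa [show (c+1) + (m + 2 - (c+1)) = m + 2 from by omega] at this

lemma leD (b : G →ₗ[ℚ] G →ₗ[ℚ] G) {i j : ℕ} (h : i ≤ j) : Dfil b j ≤ Dfil b i :=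
  antitone_nat_of_succ_le (monoD b) h

lemma Dfil_le (b : G →ₗ[ℚ] G →ₗ[ℚ] G) (F : ℕ → Submodule ℚ G) (hF1 : F 1 = ⊤)
    (hFb : ∀ (i j : ℕ) (x y : G), x ∈ F i → y ∈ F j → b x y ∈ F (i + j)) :
    ∀ k, 1 ≤ k → Dfil b k ≤ F k := by
  intro k
  induction k using Nat.strong_induction_on with
  | _ k ih =>
    match k with
    | 0 => intro h; omega
    | 1 => intro _; rw [Dfil_one, hF1]
    | (m+2) =>
      intro _
      rw [Dfil_succ_succ]
      refine iSup_le fun i => ?_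
      rw [Submodule.span_le]
      rintro z ⟨u, hu, v, hv, rfl⟩
      simp only [SetLike.mem_coe] at hu hv ⊢
      have hib : i.val ≤ m := by have := i.isLt; omega
      have h1 := ih (i.val+1) (by omega) (by omega) hu
      have h2 := ih (m+1-i.val) (by omega) (by omega) hv
      have := hFb _ _ _ _ h1 h2
      rwa [show i.val + 1 + (m + 1 - i.val) = m + 2 from by omega] at this


lemma rIter_mem (b : G →ₗ[ℚ] G →ₗ[ℚ] G) (x a : G) {i : ℕ} (hi : 1 ≤ i)
    (ha : a ∈ Dfil b i) : ∀ m, rIter (fun p q => b p q) x m a ∈ Dfil b (m + i) := by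
  intro m
  induction m with
  | zero => simpa [rIter] using ha
  | succ m ihm =>
    have hx : x ∈ Dfil b 1 := mem_Dfil_one b x
    have := mulD b (by omega : 1 ≤ m + i) (le_refl 1) ihm hx
    show b (rIter (fun p q => b p q) x m a) x ∈ Dfil b (m + 1 + i)
    rwa [show m + 1 + i = (m + i) + 1 from by omega]

lemma rIter_sub (b : G →ₗ[ℚ] G →ₗ[ℚ] G) (x : G) (m : ℕ) (a a' : G) :
    rIter (fun p q => b p q) x m (a - a')
      = rIter (fun p q => b p q) x m a - rIter (fun p q => b p q) x m a' := by
  induction m with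
  | zero => rfl
  | succ m ih => simp only [rIter, ih, map_sub, LinearMap.sub_apply]

lemma rIter_diff (b : G →ₗ[ℚ] G →ₗ[ℚ] G) {x x' : G} {k : ℕ} (hk : 1 ≤ k)
    (hd : x - x' ∈ Dfil b k) (a : G) :
    ∀ m, rIter (fun p q => b p q) x m a - rIter (fun p q => b p q) x' m a
      ∈ Dfil b (m + k) := by
  intro m
  induction m with
  | zero => simp [rIter]
  | succ m ih =>
    have hu' : rIter (fun p q => b p q) x' m a ∈ Dfil b (m + 1) :=
      rIter_mem b x' a le_rfl (mem_Dfil_one b a) m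
    have h1 := mulD b (by omega : 1 ≤ m + k) (le_refl 1) ih (mem_Dfil_one b x)
    have h2 := mulD b (by omega : 1 ≤ m + 1) hk hu' hd
    have key : rIter (fun p q => b p q) x (m+1) a - rIter (fun p q => b p q) x' (m+1) a
        = b (rIter (fun p q => b p q) x m a - rIter (fun p q => b p q) x' m a) x
          + b (rIter (fun p q => b p q) x' m a) (x - x') := by
      simp only [rIter, map_sub, LinearMap.sub_apply]
      abel
    rw [key, show m + 1 + k = (m + k) + 1 from by omega]
    exact add_mem h1 (by rwa [show m + 1 + k = (m + k) + 1 from by omega] at h2)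


end PreLieAux

open PreLieAux in
/-- In a pro-nilpotent pre-Lie algebra `g` (complete filtered with `g = F¹g`; modelled
here by a filtration `F` with `F 1 = ⊤`, `F i • F j ⊆ F (i+j)` and `F N = ⊥`), the action
`β·exp(x) = β + Σ_{j≥1}(1/j!)((⋯(β•x)•⋯)•x) + e_x` of the exponential group `Exp(g)` on
the set `g` is free and transitive: for all `β γ` there is a unique `x` with
`β·exp(x) = γ`. -/
theorem preLie_exp_action_free_transitive {G : Type*} [AddCommGroup G] [Module ℚ G]
    (b : G →ₗ[ℚ] G →ₗ[ℚ] G)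
    (hpl : ∀ x y z : G, b x (b y z) - b (b x y) z = b x (b z y) - b (b x z) y)
    (F : ℕ → Submodule ℚ G) (N : ℕ) (hN : 0 < N)
    (hF1 : F 1 = ⊤)
    (hFb : ∀ (i j : ℕ) (x y : G), x ∈ F i → y ∈ F j → b x y ∈ F (i + j))
    (hFN : F N = ⊥) :
    ∀ β γ : G, ∃! x : G, actExp (fun p q => b p q) N β x = γ := by
  intro β γ
  obtain ⟨M, rfl⟩ : ∃ M, N = M + 1 := ⟨N - 1, by omega⟩
  set T : G → G := fun x => γ + x - actExp (fun p q => b p q) (M+1) β x with hT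
  have hDbot : ∀ z : G, z ∈ Dfil b (M+1) → z = 0 := by
    intro z hz
    have := Dfil_le b F hF1 hFb (M+1) (by omega) hz
    rw [hFN] at this; simpa using this
  have hcontr : ∀ k, 1 ≤ k → ∀ x x' : G, x - x' ∈ Dfil b k →
      T x - T x' ∈ Dfil b (k+1) := by
    intro k hk x x' hd
    have e1 : actExp (fun p q => b p q) (M+1) β x - actExp (fun p q => b p q) (M+1) β x'
        = ∑ j ∈ Finset.range (M+1), ((Nat.factorial (j+1) : ℚ))⁻¹ •
            ((rIter (fun p q => b p q) x (j+1) β - rIter (fun p q => b p q) x' (j+1) β)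
              + (rIter (fun p q => b p q) x j x - rIter (fun p q => b p q) x' j x')) := by
      simp only [actExp, add_sub_add_left_eq_sub, ← Finset.sum_sub_distrib, ← smul_sub]
      refine Finset.sum_congr rfl fun j _ => ?_
      congr 1
      abel
    have e2 : T x - T x' = (x - x')
        - (actExp (fun p q => b p q) (M+1) β x - actExp (fun p q => b p q) (M+1) β x') := by
      simp only [hT]; abel
    rw [e1, Finset.sum_range_succ'] at e2
    simp only [rIter, Nat.zero_add, Nat.factorial_one, Nat.cast_one, inv_one, one_smul] at e2
    have e3 : T x - T x' = -(∑ j ∈ Finset.range M, ((Nat.factorial (j+1+1) : ℚ))⁻¹ •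
            ((rIter (fun p q => b p q) x (j+1+1) β - rIter (fun p q => b p q) x' (j+1+1) β)
              + (rIter (fun p q => b p q) x (j+1) x - rIter (fun p q => b p q) x' (j+1) x'))
          + (rIter (fun p q => b p q) x 1 β - rIter (fun p q => b p q) x' 1 β)) := by
      rw [e2]; abel
    rw [e3]
    refine neg_mem (add_mem ?_ ?_)
    · refine Submodule.sum_mem _ fun j _ => Submodule.smul_mem _ _ (add_mem ?_ ?_)
      · exact leD b (by omega : k + 1 ≤ (j+1+1) + k) (rIter_diff b hk hd β (j+1+1))
      · have hb1 : rIter (fun p q => b p q) x (j+1) x - rIter (fun p q => b p q) x' (j+1) x'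
            = rIter (fun p q => b p q) x (j+1) (x - x')
              + (rIter (fun p q => b p q) x (j+1) x' - rIter (fun p q => b p q) x' (j+1) x') := by
          rw [rIter_sub]; abel
        rw [hb1]
        refine add_mem ?_ ?_
        · exact leD b (by omega : k + 1 ≤ (j+1) + k) (rIter_mem b x (x - x') hk hd (j+1))
        · exact leD b (by omega : k + 1 ≤ (j+1) + k) (rIter_diff b hk hd x' (j+1))
    · exact leD b (by omega : k + 1 ≤ 1 + k) (rIter_diff b hk hd β 1)
  have key : ∀ x : G, T x - x = γ - actExp (fun p q => b p q) (M+1) β x := by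
    intro x; simp only [hT]; abel
  have hfix : ∀ x : G, actExp (fun p q => b p q) (M+1) β x = γ ↔ T x = x := by
    intro x
    constructor
    · intro h; rw [← sub_eq_zero, key, h, sub_self]
    · intro h
      have h2 : γ - actExp (fun p q => b p q) (M+1) β x = 0 := by
        rw [← key, h, sub_self]
      exact (sub_eq_zero.mp h2).symm
  have hiter : ∀ n, T^[n+1] 0 - T^[n] 0 ∈ Dfil b (n+1) := by
    intro n; induction n with
    | zero => exact mem_Dfil_one b _
    | succ n ih =>
      have h := hcontr (n+1) (by omega) _ _ ih
      rwa [← Function.iterate_succ_apply' T n, ← Function.iterate_succ_apply' T (n+1)] at h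
  have hfixpt : T (T^[M] 0) = T^[M] 0 := by
    have h0 := hDbot _ (hiter M)
    have h1 : T^[M+1] (0 : G) = T^[M] 0 := by rwa [sub_eq_zero] at h0
    rwa [Function.iterate_succ_apply' T M] at h1
  refine ⟨T^[M] 0, (hfix _).mpr hfixpt, ?_⟩
  intro y hy
  have hyfix : T y = y := (hfix y).mp hy
  have huniq : ∀ n, y - T^[M] 0 ∈ Dfil b (n+1) := by
    intro n; induction n with
    | zero => exact mem_Dfil_one b _
    | succ n ih =>
      have := hcontr (n+1) (by omega) y (T^[M] 0) ih
      rwa [hyfix, hfixpt] at this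
  exact sub_eq_zero.mp (hDbot _ (huniq M))
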